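/- Let G_k = G_{k-1} ∪ {e} be obtained from a digraph G_{k-1} by inserting a new directed edge e = (u,v). Let ΔF = F(G_k) \ F(G_{k-1}) be the set of spanning converging forests of G_k not present in G_{k-1}, and let F' = {φ ∈ F(G_{k-1}) : r_φ(u) = u and r_φ(v) ≠ u}. Then the map φ ↦ φ \ {e} is a bijection from ΔF to F'. -/
import Mathlib


open Finset

/-- A spanning converging forest of the digraph with edge relation `E`,
encoded by its successor map `f : V → Option V` (`f i = some j` means edge `(i,j)`
is in the forest, `f i = none` means `i` is a root).  Acyclicity is expressed by a
height function that strictly decreases along edges. -/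
def IsSCF {V : Type*} (E : V → V → Prop) (f : V → Option V) : Prop :=
  (∀ i j, f i = some j → E i j) ∧ ∃ h : V → ℕ, ∀ i j, f i = some j → h j < h i

open scoped Classical in
/-- The set `F` of all spanning converging forests of the digraph `E`. -/
noncomputable def forests {V : Type*} [Fintype V] [DecidableEq V]
    (E : V → V → Prop) : Finset (V → Option V) :=
  Finset.univ.filter (IsSCF E)

/-- The root `r_φ(i)` of the tree containing node `i` in the forest `f`:
follow successors until reaching a root. -/
def rootOf {V : Type*} [Fintype V] (f : V → Option V) (i : V) : V :=
  (fun x => (f x).getD x)^[Fintype.card V] i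

/-- The combinatorial forest-matrix entry `ω_{ij} = |F_{ij}| / |F|`. -/
noncomputable def fOmega {V : Type*} [Fintype V] [DecidableEq V]
    (E : V → V → Prop) (i j : V) : ℝ :=
  (((forests E).filter (fun f => rootOf f i = j)).card : ℝ) / ((forests E).card : ℝ)

/-- Expectation of `g` under a uniformly random spanning converging forest. -/
noncomputable def expVal {V : Type*} [Fintype V] [DecidableEq V]
    (E : V → V → Prop) (g : (V → Option V) → ℝ) : ℝ :=
  (∑ f ∈ forests E, g f) / ((forests E).card : ℝ)

/-- Variance of `g` under a uniformly random spanning converging forest. -/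
noncomputable def varVal {V : Type*} [Fintype V] [DecidableEq V]
    (E : V → V → Prop) (g : (V → Option V) → ℝ) : ℝ :=
  expVal E (fun f => (g f - expVal E g) ^ 2)

/-- The indicator estimator `ω̂_{ij}(φ) = 1_{r_φ(i) = j}`. -/
noncomputable def indEst {V : Type*} [Fintype V] [DecidableEq V]
    (i j : V) (f : V → Option V) : ℝ :=
  if rootOf f i = j then 1 else 0

/-- Out-degree `d_i` of node `i`. -/
def outDeg {V : Type*} [Fintype V] (E : V → V → Prop) [DecidableRel E] (i : V) : ℕ :=
  (Finset.univ.filter (fun j => E i j)).card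

/-- In-neighbors `N⁻(j)` of node `j`. -/
def inNbrs {V : Type*} [Fintype V] (E : V → V → Prop) [DecidableRel E] (j : V) : Finset V :=
  Finset.univ.filter (fun k => E k j)

/-- The out-degree Laplacian `L = D - A`. -/
noncomputable def lap {V : Type*} [Fintype V] [DecidableEq V]
    (E : V → V → Prop) [DecidableRel E] : Matrix V V ℝ :=
  Matrix.of fun i j => (if i = j then (outDeg E i : ℝ) else 0) - (if E i j then (1 : ℝ) else 0)

/-- The forest matrix `Ω = (I + L)⁻¹`. -/
noncomputable def forestMatrix {V : Type*} [Fintype V] [DecidableEq V]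
    (E : V → V → Prop) [DecidableRel E] : Matrix V V ℝ :=
  (1 + lap E)⁻¹


section Aux
variable {V : Type*} [Fintype V] [DecidableEq V]

/-- The step map of a forest. -/
def stp (f : V → Option V) (x : V) : V := (f x).getD x

lemma rootOf_eq_iter (f : V → Option V) (x : V) :
    rootOf f x = (stp f)^[Fintype.card V] x := rfl

lemma stp_h_le {f : V → Option V} {h : V → ℕ}
    (hh : ∀ i j, f i = some j → h j < h i) (x : V) : h (stp f x) ≤ h x := by
  cases hf : f x with
  | none => simp [stp, hf]
  | some j => simpa [stp, hf] using (hh x j hf).le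

lemma iter_h_le {f : V → Option V} {h : V → ℕ}
    (hh : ∀ i j, f i = some j → h j < h i) (n : ℕ) (x : V) :
    h ((stp f)^[n] x) ≤ h x := by
  induction n with
  | zero => simp
  | succ n ih =>
    rw [Function.iterate_succ_apply']
    exact (stp_h_le hh _).trans ih

lemma rootOf_of_none {f : V → Option V} {x : V} (hf : f x = none) :
    rootOf f x = x :=
  Function.iterate_fixed (by simp [hf]) _

lemma f_rootOf_eq_none {f : V → Option V} {h : V → ℕ}
    (hh : ∀ i j, f i = some j → h j < h i) (x : V) :
    f (rootOf f x) = none := by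
  have stab : ∀ n m, f ((stp f)^[n] x) = none →
      (stp f)^[n + m] x = (stp f)^[n] x := by
    intro n m hn
    rw [add_comm, Function.iterate_add_apply]
    exact Function.iterate_fixed (by simp [stp, hn]) m
  have hex : ∃ n ≤ Fintype.card V, f ((stp f)^[n] x) = none := by
    by_contra hc
    push_neg at hc
    have hstrict : ∀ n ≤ Fintype.card V, ∀ m < n,
        h ((stp f)^[n] x) < h ((stp f)^[m] x) := by
      intro n hn
      induction n with
      | zero => intro m hm; omega
      | succ n ih =>
        intro m hm
        have hne : f ((stp f)^[n] x) ≠ none := hc n (by omega)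
        obtain ⟨j, hj⟩ := Option.ne_none_iff_exists'.mp hne
        have hlt : h ((stp f)^[n+1] x) < h ((stp f)^[n] x) := by
          rw [Function.iterate_succ_apply']
          simpa [stp, hj] using hh _ j hj
        rcases Nat.lt_succ_iff_lt_or_eq.mp hm with hm' | rfl
        · exact hlt.trans (ih (by omega) m hm')
        · exact hlt
    have hinj : Set.InjOn (fun n => (stp f)^[n] x)
        ↑(Finset.range (Fintype.card V + 1)) := by
      intro a ha b hb hab
      simp only [Finset.coe_range, Set.mem_Iio] at ha hb
      by_contra hne
      rcases Nat.lt_or_ge a b with hlt | hge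
      · have hab' : (stp f)^[a] x = (stp f)^[b] x := hab
        have := hstrict b (by omega) a hlt
        rw [hab'] at this; omega
      · have hlt : b < a := lt_of_le_of_ne hge (Ne.symm hne)
        have hab' : (stp f)^[a] x = (stp f)^[b] x := hab
        have := hstrict a (by omega) b hlt
        rw [hab'] at this; omega
    have hcard := Finset.card_le_card_of_injOn (fun n => (stp f)^[n] x)
      (fun a _ => Finset.mem_univ _) hinj
    simp [Finset.card_range] at hcard
  obtain ⟨n, hn, h0⟩ := hex
  have hroot : rootOf f x = (stp f)^[n] x := by
    have h1 := stab n (Fintype.card V - n) h0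
    rw [show n + (Fintype.card V - n) = Fintype.card V by omega] at h1
    exact h1
  rw [hroot]; exact h0

lemma rootOf_stp {f : V → Option V} {h : V → ℕ}
    (hh : ∀ i j, f i = some j → h j < h i) (x : V) :
    rootOf f (stp f x) = rootOf f x := by
  have h1 : rootOf f (stp f x) = (stp f)^[Fintype.card V + 1] x := by
    rw [Function.iterate_succ_apply]; rfl
  rw [h1, Function.iterate_succ_apply']
  have h2 := f_rootOf_eq_none hh x
  show stp f (rootOf f x) = rootOf f x
  simp [stp, h2]

lemma rootOf_edge {f : V → Option V} {h : V → ℕ}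
    (hh : ∀ i j, f i = some j → h j < h i) {x y : V} (hxy : f x = some y) :
    rootOf f y = rootOf f x := by
  have := rootOf_stp hh x
  rwa [show stp f x = y by simp [stp, hxy]] at this

lemma none_of_rootOf_self {f : V → Option V} {h : V → ℕ}
    (hh : ∀ i j, f i = some j → h j < h i) {x : V} (hr : rootOf f x = x) :
    f x = none := by
  cases hf : f x with
  | none => rfl
  | some j =>
    exfalso
    have hc : 0 < Fintype.card V := Fintype.card_pos_iff.mpr ⟨x⟩
    have h1 : rootOf f x = (stp f)^[Fintype.card V - 1] (stp f x) := by
      conv_lhs => rw [rootOf_eq_iter,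
        show Fintype.card V = (Fintype.card V - 1) + 1 by omega,
        Function.iterate_succ_apply]
    have h2 : h (rootOf f x) ≤ h (stp f x) := h1 ▸ iter_h_le hh _ _
    have h3 : h (stp f x) < h x := by simpa [stp, hf] using hh x j hf
    rw [hr] at h2; omega

end Aux

/-- inserting the new edge e = (u,v), deletion of e (i.e. making u
a root) is a bijection from ΔF = F(G_k) \\ F(G_{k-1}) onto
F' = {φ ∈ F(G_{k-1}) : r_φ(u) = u, r_φ(v) ≠ u}. -/
theorem insert_edge_bijection {V : Type*} [Fintype V] [DecidableEq V]
    (E : V → V → Prop) (hE : ∀ i, ¬ E i i)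
    (u v : V) (huv : u ≠ v) (hnew : ¬ E u v) :
    Set.BijOn (fun f : V → Option V => Function.update f u none)
      (↑(forests (fun a b => E a b ∨ (a = u ∧ b = v)) \ forests E))
      (↑((forests E).filter (fun f => rootOf f u = u ∧ rootOf f v ≠ u))) := by
  classical
  have hmem : ∀ f : V → Option V,
      f ∈ forests (fun a b => E a b ∨ (a = u ∧ b = v)) \ forests E ↔
        (IsSCF (fun a b => E a b ∨ (a = u ∧ b = v)) f ∧ f u = some v) := by
    intro f
    simp only [Finset.mem_sdiff, forests, Finset.mem_filter, Finset.mem_univ, true_and]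
    constructor
    · rintro ⟨hk, hnot⟩
      refine ⟨hk, ?_⟩
      by_contra hfu
      apply hnot
      obtain ⟨he, hh⟩ := hk
      refine ⟨fun i j hij => ?_, hh⟩
      rcases he i j hij with h | ⟨rfl, rfl⟩
      · exact h
      · exact absurd hij hfu
    · rintro ⟨hk, hfu⟩
      exact ⟨hk, fun hscf => hnew (hscf.1 u v hfu)⟩
  have hmem' : ∀ f : V → Option V,
      f ∈ (forests E).filter (fun f => rootOf f u = u ∧ rootOf f v ≠ u) ↔
        (IsSCF E f ∧ rootOf f u = u ∧ rootOf f v ≠ u) := by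
    intro f
    simp [forests, Finset.mem_filter]
  refine ⟨?_, ?_, ?_⟩
  · -- MapsTo
    intro f hf
    rw [Finset.mem_coe, hmem] at hf
    obtain ⟨⟨hEdge, hk, hhk⟩, hfu⟩ := hf
    set g : V → Option V := Function.update f u none with hg
    have hgu : g u = none := Function.update_self u none f
    have hgne : ∀ i j, g i = some j → f i = some j := by
      intro i j hij
      by_cases hi : i = u
      · subst hi; rw [hgu] at hij; exact absurd hij (by simp)
      · rwa [hg, Function.update_of_ne hi] at hij
    have hhg : ∀ i j, g i = some j → hk j < hk i := fun i j hij => hhk i j (hgne i j hij)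
    rw [Finset.mem_coe, hmem']
    refine ⟨⟨fun i j hij => ?_, hk, hhg⟩, rootOf_of_none hgu, ?_⟩
    · rcases hEdge i j (hgne i j hij) with h' | ⟨hiu, hjv⟩
      · exact h'
      · exact absurd (show g u = some j from hiu ▸ hij) (by simp [hgu])
    · intro hrv
      have h1 : hk (rootOf g v) ≤ hk v := iter_h_le hhg _ v
      rw [hrv] at h1
      have h2 : hk v < hk u := hhk u v hfu
      omega
  · -- InjOn
    intro f hf f' hf' heq
    rw [Finset.mem_coe, hmem] at hf hf'
    funext x
    by_cases hx : x = u
    · subst hx; rw [hf.2, hf'.2]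
    · have := congrFun heq x
      simpa [Function.update_of_ne hx] using this
  · -- SurjOn
    intro g hg
    rw [Finset.mem_coe, hmem'] at hg
    obtain ⟨⟨hEg, h, hh⟩, hru, hrv⟩ := hg
    have hgu : g u = none := none_of_rootOf_self hh hru
    refine ⟨Function.update g u (some v), ?_, ?_⟩
    · rw [Finset.mem_coe, hmem]
      set f : V → Option V := Function.update g u (some v) with hf
      have hfu : f u = some v := Function.update_self u (some v) g
      have hfi : ∀ i, i ≠ u → f i = g i := fun i hi => Function.update_of_ne hi _ _
      refine ⟨⟨fun i j hij => ?_, ?_⟩, hfu⟩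
      · by_cases hi : i = u
        · subst hi
          rw [hfu] at hij
          exact Or.inr ⟨rfl, (Option.some.inj hij).symm⟩
        · rw [hfi i hi] at hij
          exact Or.inl (hEg i j hij)
      · refine ⟨fun x => if rootOf g x = u then h x + (h v + 1) else h x, fun i j hij => ?_⟩
        by_cases hi : i = u
        · subst hi
          rw [hfu] at hij
          obtain rfl : v = j := Option.some.inj hij
          show (if rootOf g v = i then h v + (h v + 1) else h v) <
               (if rootOf g i = i then h i + (h v + 1) else h i)
          rw [if_neg hrv, if_pos hru]
          omega
        · rw [hfi i hi] at hij
          have hroot : rootOf g j = rootOf g i := rootOf_edge hh hij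
          have hlt : h j < h i := hh i j hij
          show (if rootOf g j = u then h j + (h v + 1) else h j) <
               (if rootOf g i = u then h i + (h v + 1) else h i)
          rw [hroot]
          by_cases hri : rootOf g i = u
          · rw [if_pos hri, if_pos hri]; omega
          · rw [if_neg hri, if_neg hri]; omega
    · show Function.update (Function.update g u (some v)) u none = g
      rw [Function.update_idem, ← hgu, Function.update_eq_self]
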